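/- (Approximation guarantee of JAG-M-HEUR) With a strictly positive n₁×n₂ matrix A, P stripes (1 ≤ P < m, P < n₁) obtained by optimal 1D partitioning of the row-projection, and each stripe S allocated Q_S = ⌈(m−P)·L(S)/L(A)⌉ processors (where L(S) is the stripe load and L(A) the total load) and then optimally 1D-partitioned, the resulting maximum load is at most (m/(m−P) + mΔ/(P n₂) + Δ² m/(n₁ n₂)) · L(A)/m, where Δ = max A / min A. -/

import Mathlib

/-- Optimal maximum interval load for partitioning the length-`n` prefix of the
array `f` into `k` contiguous (possibly empty) intervals. -/
noncomputable def opt1D (f : ℕ → ℝ) (n k : ℕ) : ℝ :=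
  sInf {L | ∃ c : ℕ → ℕ, Monotone c ∧ c 0 = 0 ∧ c k = n ∧
    L = ⨆ j : Fin k, ∑ i ∈ Finset.Ico (c j.1) (c (j.1 + 1)), f i}

lemma opt1D_zero (f : ℕ → ℝ) (n : ℕ) (hn : 0 < n) : opt1D f n 0 = 0 := by
  unfold opt1D
  have : {L | ∃ c : ℕ → ℕ, Monotone c ∧ c 0 = 0 ∧ c 0 = n ∧
      L = ⨆ j : Fin 0, ∑ i ∈ Finset.Ico (c j.1) (c (j.1 + 1)), f i} = ∅ := by
    ext L
    simp only [Set.mem_setOf_eq, Set.mem_empty_iff_false, iff_false]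
    rintro ⟨c, _, h0, hk, _⟩
    omega
  rw [this, Real.sInf_empty]

lemma opt1D_le_greedy (f : ℕ → ℝ) (n k : ℕ) (hn : 0 < n) (hk : 0 < k)
    (hfpos : ∀ i < n, 0 < f i) (M : ℝ) (hM : ∀ i < n, f i ≤ M) :
    opt1D f n k ≤ (∑ i ∈ Finset.range n, f i) / k + M := by
  set L := ∑ i ∈ Finset.range n, f i with hLdef
  have hL0 : 0 ≤ L := Finset.sum_nonneg fun i hi => (hfpos i (Finset.mem_range.mp hi)).le
  have hkR : (0:ℝ) < k := by exact_mod_cast hk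
  have hM0 : 0 ≤ M := le_trans (hfpos 0 hn).le (hM 0 hn)
  set F : ℕ → ℝ := fun N => ∑ i ∈ Finset.range N, f i with hF
  have htar : ∀ j : ℕ, ((min j k : ℕ) : ℝ) * (L / k) ≤ F n := by
    intro j
    have h1 : ((min j k : ℕ) : ℝ) ≤ (k : ℝ) := by exact_mod_cast Nat.min_le_right j k
    have : ((min j k : ℕ) : ℝ) * (L / k) ≤ (k : ℝ) * (L / k) :=
      mul_le_mul_of_nonneg_right h1 (by positivity)
    calc ((min j k : ℕ) : ℝ) * (L / k) ≤ (k : ℝ) * (L / k) := this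
      _ = L := by field_simp
      _ = F n := rfl
  have ex : ∀ j : ℕ, ∃ N, ((min j k : ℕ) : ℝ) * (L / k) ≤ F N := fun j => ⟨n, htar j⟩
  set c : ℕ → ℕ := fun j => Nat.find (ex j) with hc
  have hcle : ∀ j, c j ≤ n := fun j => Nat.find_le (htar j)
  have hspec : ∀ j, ((min j k : ℕ) : ℝ) * (L / k) ≤ F (c j) := fun j => Nat.find_spec (ex j)
  have hmono : Monotone c := by
    intro j₁ j₂ h
    apply Nat.find_mono
    intro N hN
    refine le_trans ?_ hN
    apply mul_le_mul_of_nonneg_right _ (by positivity)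
    exact_mod_cast min_le_min h (le_refl k)
  have hc0 : c 0 = 0 := by
    rw [hc]
    rw [Nat.find_eq_zero]
    simp [F]
  have hck : c k = n := by
    refine le_antisymm (hcle k) ?_
    by_contra hcon
    push_neg at hcon
    have h1 : F (c k) < F n := by
      have h2 : F n - F (c k) = ∑ i ∈ Finset.Ico (c k) n, f i := by
        rw [Finset.sum_Ico_eq_sub f (le_of_lt hcon)]
      have h3 : 0 < ∑ i ∈ Finset.Ico (c k) n, f i := by
        apply Finset.sum_pos
        · intro i hi
          exact hfpos i (Finset.mem_Ico.mp hi).2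
        · exact Finset.nonempty_Ico.mpr hcon
      linarith
    have h4 := hspec k
    rw [min_self] at h4
    have h5 : (k : ℝ) * (L / k) = L := by field_simp
    rw [h5] at h4
    have : F n = L := rfl
    linarith
  have key : ∀ j : Fin k, ∑ i ∈ Finset.Ico (c j.1) (c (j.1 + 1)), f i ≤ L / k + M := by
    rintro ⟨j, hj⟩
    simp only
    have hab : c j ≤ c (j + 1) := hmono (Nat.le_succ j)
    rw [Finset.sum_Ico_eq_sub f hab]
    have h1 : (j : ℝ) * (L / k) ≤ F (c j) := by
      have := hspec j
      rwa [min_eq_left hj.le] at this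
    have h2 : F (c (j + 1)) ≤ ((j : ℝ) + 1) * (L / k) + M := by
      rcases Nat.eq_zero_or_pos (c (j + 1)) with h0 | hpos'
      · rw [h0]
        have : F 0 = 0 := by simp [F]
        rw [this]
        positivity
      · obtain ⟨d, hd⟩ : ∃ d, c (j + 1) = d + 1 := ⟨c (j + 1) - 1, by omega⟩
      
        have hfind : c (j + 1) = Nat.find (ex (j + 1)) := by rw [hc]
        have hdlt : d < Nat.find (ex (j + 1)) := by rw [← hfind]; omega
        have hlt : ¬ ((min (j+1) k : ℕ) : ℝ) * (L / k) ≤ F d := Nat.find_min (ex (j+1)) hdlt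
        push_neg at hlt
        rw [min_eq_left (by omega : j + 1 ≤ k)] at hlt
        have hdn : d < n := by have := hcle (j + 1); omega
        have hFd : F (d + 1) = F d + f d := Finset.sum_range_succ f d
        have : f d ≤ M := hM d hdn
        rw [hd, hFd]
        push_cast at hlt ⊢
        linarith
    have h3 : ((j : ℝ) + 1) * (L / k) - (j : ℝ) * (L / k) = L / k := by ring
    linarith
  haveI : Nonempty (Fin k) := ⟨⟨0, hk⟩⟩
  have hmem : (⨆ j : Fin k, ∑ i ∈ Finset.Ico (c j.1) (c (j.1 + 1)), f i) ∈
      {L' | ∃ c' : ℕ → ℕ, Monotone c' ∧ c' 0 = 0 ∧ c' k = n ∧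
        L' = ⨆ j : Fin k, ∑ i ∈ Finset.Ico (c' j.1) (c' (j.1 + 1)), f i} :=
    ⟨c, hmono, hc0, hck, rfl⟩
  have hbdd : BddBelow {L' | ∃ c' : ℕ → ℕ, Monotone c' ∧ c' 0 = 0 ∧ c' k = n ∧
      L' = ⨆ j : Fin k, ∑ i ∈ Finset.Ico (c' j.1) (c' (j.1 + 1)), f i} := by
    refine ⟨0, ?_⟩
    rintro x ⟨c', hm', h0', hk', rfl⟩
    have hterm : ∀ j : Fin k, 0 ≤ ∑ i ∈ Finset.Ico (c' j.1) (c' (j.1 + 1)), f i := by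
      rintro ⟨j, hj⟩
      show 0 ≤ ∑ i ∈ Finset.Ico (c' j) (c' (j + 1)), f i
      apply Finset.sum_nonneg
      intro i hi
      have hi2 := (Finset.mem_Ico.mp hi).2
      have : c' (j + 1) ≤ c' k := hm' (by omega)
      exact (hfpos i (by omega)).le
    exact le_trans (hterm ⟨0, hk⟩)
      (le_ciSup (f := fun j : Fin k => ∑ i ∈ Finset.Ico (c' j.1) (c' (j.1 + 1)), f i)
        (Set.Finite.bddAbove (Set.finite_range _)) (⟨0, hk⟩ : Fin k))
  calc opt1D f n k ≤ ⨆ j : Fin k, ∑ i ∈ Finset.Ico (c j.1) (c (j.1 + 1)), f i :=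
        csInf_le hbdd hmem
    _ ≤ L / k + M := ciSup_le key

lemma aux_ratio (s v L x t : ℝ) (N : ℕ) (hN : 0 < N) (hv : 0 < v) (hs : 0 ≤ s)
    (hx : x ≤ t * s) (hL : (N : ℝ) * (t * v) ≤ L) :
    x ≤ (s / v) * L / N := by
  have hNr : (0:ℝ) < N := by exact_mod_cast hN
  calc x ≤ t * s := hx
    _ = (s / v) * ((N : ℝ) * (t * v)) / N := by field_simp
    _ ≤ (s / v) * L / N := by gcongr
/-- guarantee of JAG-M-HEUR: for a strictly positive `n₁ × n₂`
matrix `A` with `Δ = (max A)/(min A)`, stripes `r` obtained by an optimal 1D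
partition of the row projection into `P` stripes (`1 ≤ P < m`, `P < n₁`), and
each stripe `S` allocated `Q_S = ⌈(m−P)·L(S)/L(A)⌉` processors and then
partitioned optimally in 1D, every resulting rectangle load is at most
`(m/(m−P) + mΔ/(P n₂) + Δ² m/(n₁ n₂)) · L(A)/m`. -/
theorem stmt_8 (n₁ n₂ P m : ℕ) (hP : 1 ≤ P) (hPm : P < m) (hPn : P < n₁)
    (hn₂ : 0 < n₂) (A : ℕ → ℕ → ℝ) (hpos : ∀ i < n₁, ∀ j < n₂, 0 < A i j)
    (Δ : ℝ)
    (hΔ : Δ = ((Finset.range n₁ ×ˢ Finset.range n₂).sup'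
        ((Finset.nonempty_range_iff.mpr (by omega)).product
          (Finset.nonempty_range_iff.mpr (by omega))) (fun p => A p.1 p.2)) /
      ((Finset.range n₁ ×ˢ Finset.range n₂).inf'
        ((Finset.nonempty_range_iff.mpr (by omega)).product
          (Finset.nonempty_range_iff.mpr (by omega))) (fun p => A p.1 p.2)))
    (r : ℕ → ℕ) (hr : Monotone r) (hr0 : r 0 = 0) (hrP : r P = n₁)
    (hropt : (⨆ t : Fin P, ∑ i ∈ Finset.Ico (r t.1) (r (t.1 + 1)),
        ∑ j ∈ Finset.range n₂, A i j) =
      opt1D (fun i => ∑ j ∈ Finset.range n₂, A i j) n₁ P) :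
    ∀ t < P,
      opt1D (fun j => ∑ i ∈ Finset.Ico (r t) (r (t + 1)), A i j) n₂
        (⌈((m : ℝ) - P) *
            (∑ i ∈ Finset.Ico (r t) (r (t + 1)), ∑ j ∈ Finset.range n₂, A i j) /
            (∑ i ∈ Finset.range n₁, ∑ j ∈ Finset.range n₂, A i j)⌉₊) ≤
      ((m : ℝ) / ((m : ℝ) - P) + m * Δ / (P * n₂) + Δ ^ 2 * m / (n₁ * n₂)) *
        (∑ i ∈ Finset.range n₁, ∑ j ∈ Finset.range n₂, A i j) / m := by
  intro t ht
  have hn₁ : 0 < n₁ := by omega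
  -- notation
  set supA := ((Finset.range n₁ ×ˢ Finset.range n₂).sup'
      ((Finset.nonempty_range_iff.mpr (by omega : n₁ ≠ 0)).product
        (Finset.nonempty_range_iff.mpr (by omega : n₂ ≠ 0))) (fun p => A p.1 p.2)) with hsupA
  set infA := ((Finset.range n₁ ×ˢ Finset.range n₂).inf'
      ((Finset.nonempty_range_iff.mpr (by omega : n₁ ≠ 0)).product
        (Finset.nonempty_range_iff.mpr (by omega : n₂ ≠ 0))) (fun p => A p.1 p.2)) with hinfA
  have hΔ' : Δ = supA / infA := hΔ
  have hmemprod : ∀ i < n₁, ∀ j < n₂, ((i, j) : ℕ × ℕ) ∈ Finset.range n₁ ×ˢ Finset.range n₂ := by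
    intro i hi j hj
    exact Finset.mem_product.mpr ⟨Finset.mem_range.mpr hi, Finset.mem_range.mpr hj⟩
  have hinf_le : ∀ i < n₁, ∀ j < n₂, infA ≤ A i j := by
    intro i hi j hj
    exact Finset.inf'_le _ (hmemprod i hi j hj)
  have hle_sup : ∀ i < n₁, ∀ j < n₂, A i j ≤ supA := by
    intro i hi j hj
    exact Finset.le_sup' (fun p : ℕ × ℕ => A p.1 p.2) (hmemprod i hi j hj)
  have hinf_pos : 0 < infA := by
    obtain ⟨p, hp, hpe⟩ := Finset.exists_mem_eq_inf' ((Finset.nonempty_range_iff.mpr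
      (by omega : n₁ ≠ 0)).product (Finset.nonempty_range_iff.mpr (by omega : n₂ ≠ 0)))
      (fun p => A p.1 p.2)
    rw [hinfA, hpe]
    obtain ⟨h1, h2⟩ := Finset.mem_product.mp hp
    exact hpos p.1 (Finset.mem_range.mp h1) p.2 (Finset.mem_range.mp h2)
  have hsup_pos : 0 < supA := lt_of_lt_of_le (hpos 0 hn₁ 0 hn₂) (hle_sup 0 hn₁ 0 hn₂)
  have hΔpos : 0 < Δ := by rw [hΔ']; positivity
  set LA := ∑ i ∈ Finset.range n₁, ∑ j ∈ Finset.range n₂, A i j with hLA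
  set LS := ∑ i ∈ Finset.Ico (r t) (r (t + 1)), ∑ j ∈ Finset.range n₂, A i j with hLS
  have hrt1 : r (t + 1) ≤ n₁ := hrP ▸ hr (by omega : t + 1 ≤ P)
  have hrow_pos : ∀ i < n₁, 0 < ∑ j ∈ Finset.range n₂, A i j := by
    intro i hi
    apply Finset.sum_pos (fun j hj => hpos i hi j (Finset.mem_range.mp hj))
    exact Finset.nonempty_range_iff.mpr (by omega)
  have hLApos : 0 < LA := by
    apply Finset.sum_pos (fun i hi => hrow_pos i (Finset.mem_range.mp hi))
    exact Finset.nonempty_range_iff.mpr (by omega)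
  have hmR : (0:ℝ) < m := by exact_mod_cast (by omega : 0 < m)
  have hmP : (0:ℝ) < (m:ℝ) - P := by
    have : (P:ℝ) < m := by exact_mod_cast hPm
    linarith
  have hPR : (0:ℝ) < P := by exact_mod_cast hP
  have hn₁R : (0:ℝ) < n₁ := by exact_mod_cast hn₁
  have hn₂R : (0:ℝ) < n₂ := by exact_mod_cast hn₂
  -- bound on row sums: row i ≤ Δ * LA / n₁
  have hrow_bd : ∀ i < n₁, ∑ j ∈ Finset.range n₂, A i j ≤ Δ * LA / n₁ := by
    intro i hi
    have hx : ∑ j ∈ Finset.range n₂, A i j ≤ (n₂ : ℝ) * supA := by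
      calc ∑ j ∈ Finset.range n₂, A i j ≤ ∑ _j ∈ Finset.range n₂, supA :=
            Finset.sum_le_sum (fun j hj => hle_sup i hi j (Finset.mem_range.mp hj))
        _ = (n₂ : ℝ) * supA := by rw [Finset.sum_const, Finset.card_range, nsmul_eq_mul]
    have hL : (n₁ : ℝ) * ((n₂ : ℝ) * infA) ≤ LA := by
      calc (n₁ : ℝ) * ((n₂ : ℝ) * infA) = ∑ i' ∈ Finset.range n₁, ((n₂:ℝ) * infA) := by
            rw [Finset.sum_const, Finset.card_range, nsmul_eq_mul]
        _ ≤ LA := by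
            apply Finset.sum_le_sum
            intro i' hi'
            calc (n₂:ℝ) * infA = ∑ _j ∈ Finset.range n₂, infA := by
                  rw [Finset.sum_const, Finset.card_range, nsmul_eq_mul]
              _ ≤ ∑ j ∈ Finset.range n₂, A i' j := Finset.sum_le_sum
                  (fun j hj => hinf_le i' (Finset.mem_range.mp hi') j (Finset.mem_range.mp hj))
    have := aux_ratio supA infA LA (∑ j ∈ Finset.range n₂, A i j) (n₂:ℝ) n₁ hn₁
      hinf_pos hsup_pos.le hx hL
    rwa [← hΔ'] at this
  -- LS ≤ optimal 1D = iSup ≤ LA/P + Δ*LA/n₁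
  have hLS_le : LS ≤ LA / P + Δ * LA / n₁ := by
    have h1 : LS ≤ ⨆ t' : Fin P, ∑ i ∈ Finset.Ico (r t'.1) (r (t'.1 + 1)),
        ∑ j ∈ Finset.range n₂, A i j :=
      le_ciSup (f := fun t' : Fin P => ∑ i ∈ Finset.Ico (r t'.1) (r (t'.1 + 1)),
        ∑ j ∈ Finset.range n₂, A i j) (Set.Finite.bddAbove (Set.finite_range _)) ⟨t, ht⟩
    rw [hropt] at h1
    have h2 : opt1D (fun i => ∑ j ∈ Finset.range n₂, A i j) n₁ P ≤ LA / P + Δ * LA / n₁ := by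
      have := opt1D_le_greedy (fun i => ∑ j ∈ Finset.range n₂, A i j) n₁ P hn₁ hP
        hrow_pos (Δ * LA / n₁) hrow_bd
      exact this
    linarith
  -- case split on stripe emptiness
  rcases Nat.lt_or_ge (r t) (r (t + 1)) with hne | hempty
  swap
  · -- empty stripe
    have hre : r (t + 1) = r t := le_antisymm hempty (hr (Nat.le_succ t))
    have hLS0 : LS = 0 := by
      rw [hLS, hre, Finset.Ico_self, Finset.sum_empty]
    have hQ0 : ⌈((m : ℝ) - P) * LS / LA⌉₊ = 0 := by
      rw [hLS0]; simp
    rw [hQ0, opt1D_zero _ _ hn₂]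
    have hterm1 : 0 ≤ (m : ℝ) / ((m : ℝ) - P) := by positivity
    have hterm2 : 0 ≤ (m : ℝ) * Δ / (P * n₂) := by positivity
    have hterm3 : 0 ≤ Δ ^ 2 * (m : ℝ) / (n₁ * n₂) := by positivity
    have : (0:ℝ) ≤ ((m : ℝ) / ((m : ℝ) - P) + m * Δ / (P * n₂) + Δ ^ 2 * m / (n₁ * n₂)) := by
      linarith
    positivity
  · -- nonempty stripe
    have hLSpos : 0 < LS := by
      apply Finset.sum_pos
      · intro i hi
        have hi' := Finset.mem_Ico.mp hi
        exact hrow_pos i (by omega)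
      · exact Finset.nonempty_Ico.mpr hne
    set Q := ⌈((m : ℝ) - P) * LS / LA⌉₊ with hQ
    have hQge : ((m : ℝ) - P) * LS / LA ≤ (Q : ℝ) := Nat.le_ceil _
    have hQpos : 0 < Q := by
      rw [hQ]
      apply Nat.ceil_pos.mpr
      positivity
    have hQR : (0:ℝ) < Q := by exact_mod_cast hQpos
    -- column sums within the stripe
    have hcard : (Finset.Ico (r t) (r (t + 1))).card = r (t + 1) - r t := Nat.card_Ico _ _
    have hcol_pos : ∀ j < n₂, 0 < ∑ i ∈ Finset.Ico (r t) (r (t + 1)), A i j := by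
      intro j hj
      apply Finset.sum_pos
      · intro i hi
        have hi' := Finset.mem_Ico.mp hi
        exact hpos i (by omega) j hj
      · exact Finset.nonempty_Ico.mpr hne
    have hcol_bd : ∀ j < n₂, ∑ i ∈ Finset.Ico (r t) (r (t + 1)), A i j ≤ Δ * LS / n₂ := by
      intro j hj
      have hx : ∑ i ∈ Finset.Ico (r t) (r (t + 1)), A i j
          ≤ ((r (t+1) - r t : ℕ) : ℝ) * supA := by
        calc ∑ i ∈ Finset.Ico (r t) (r (t + 1)), A i j
            ≤ ∑ i ∈ Finset.Ico (r t) (r (t + 1)), supA := by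
              apply Finset.sum_le_sum
              intro i hi
              have hi' := Finset.mem_Ico.mp hi
              exact hle_sup i (by omega) j hj
          _ = ((r (t+1) - r t : ℕ) : ℝ) * supA := by
              rw [Finset.sum_const, hcard, nsmul_eq_mul]
      have hL : (n₂ : ℝ) * (((r (t+1) - r t : ℕ) : ℝ) * infA) ≤ LS := by
        have hswap : LS = ∑ j' ∈ Finset.range n₂, ∑ i ∈ Finset.Ico (r t) (r (t + 1)), A i j' :=
          Finset.sum_comm
        rw [hswap]
        calc (n₂ : ℝ) * (((r (t+1) - r t : ℕ) : ℝ) * infA)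
            = ∑ _j' ∈ Finset.range n₂, (((r (t+1) - r t : ℕ) : ℝ) * infA) := by
              rw [Finset.sum_const, Finset.card_range, nsmul_eq_mul]
          _ ≤ _ := by
              apply Finset.sum_le_sum
              intro j' hj'
              calc ((r (t+1) - r t : ℕ) : ℝ) * infA
                  = ∑ i ∈ Finset.Ico (r t) (r (t + 1)), infA := by
                    rw [Finset.sum_const, hcard, nsmul_eq_mul]
                _ ≤ ∑ i ∈ Finset.Ico (r t) (r (t + 1)), A i j' := by
                    apply Finset.sum_le_sum
                    intro i hi
                    have hi' := Finset.mem_Ico.mp hi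
                    exact hinf_le i (by omega) j' (Finset.mem_range.mp hj')
      have := aux_ratio supA infA LS (∑ i ∈ Finset.Ico (r t) (r (t + 1)), A i j)
        ((r (t+1) - r t : ℕ) : ℝ) n₂ hn₂ hinf_pos hsup_pos.le hx hL
      rwa [← hΔ'] at this
    -- greedy bound within the stripe
    have hgreedy : opt1D (fun j => ∑ i ∈ Finset.Ico (r t) (r (t + 1)), A i j) n₂ Q
        ≤ LS / Q + Δ * LS / n₂ := by
      have h := opt1D_le_greedy (fun j => ∑ i ∈ Finset.Ico (r t) (r (t + 1)), A i j) n₂ Q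
        hn₂ hQpos hcol_pos (Δ * LS / n₂) hcol_bd
      have hsum : (∑ j ∈ Finset.range n₂, ∑ i ∈ Finset.Ico (r t) (r (t + 1)), A i j) = LS :=
        (Finset.sum_comm)
      rwa [hsum] at h
    -- LS / Q ≤ LA / (m - P)
    have hDQ : LS / Q ≤ LA / ((m : ℝ) - P) := by
      rw [div_le_div_iff₀ hQR hmP]
      have h1 : (((m : ℝ) - P) * LS / LA) * LA ≤ (Q : ℝ) * LA :=
        mul_le_mul_of_nonneg_right hQge hLApos.le
      have h2 : (((m : ℝ) - P) * LS / LA) * LA = ((m : ℝ) - P) * LS := by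
        field_simp
      nlinarith
    -- combine
    have hE : Δ * LS / n₂ ≤ Δ * (LA / P + Δ * LA / n₁) / n₂ := by
      gcongr
    have hfinal : LS / Q + Δ * LS / n₂ ≤
        ((m : ℝ) / ((m : ℝ) - P) + m * Δ / (P * n₂) + Δ ^ 2 * m / (n₁ * n₂)) * LA / m := by
      have heq : ((m : ℝ) / ((m : ℝ) - P) + m * Δ / (P * n₂) + Δ ^ 2 * m / (n₁ * n₂)) * LA / m
          = LA / ((m : ℝ) - P) + Δ * (LA / P + Δ * LA / n₁) / n₂ := by
        field_simp
        ring
      rw [heq]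
      linarith
    exact le_trans hgreedy hfinal
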